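/- Let α be a composition of n and P ∈ SET(α) with P ≠ S^{col}_α. Then there exists j ∈ {1,…,n−1} such that π_j^{RS*}(S^{col}_α) = S^{col}_α but π_j^{RS*}(P) ≠ P. -/

import Mathlib

open Classical

namespace ImmHecke

/-- A filling assigns a natural-number entry to each cell `(row, column)` (0-indexed);
row `0` is the bottom row.  Cells outside the diagram carry the junk value `0`. -/
abbrev Filling : Type := ℕ × ℕ → ℕ

/-- `c` is a cell of the diagram of the composition `α` (0-indexed rows and columns;
row `i` has `α_i` cells). -/
def IsCell (α : List ℕ) (c : ℕ × ℕ) : Prop :=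
  c.1 < α.length ∧ c.2 < α.getD c.1 0

/-- `α` is a composition of `n`: a list of positive integers summing to `n`. -/
def IsComposition (α : List ℕ) (n : ℕ) : Prop :=
  (∀ a ∈ α, 0 < a) ∧ α.sum = n

/-- `T` is a bijective filling of the diagram of `α` with the entries `1, …, n`
(where `n = α.sum`), and with value `0` off the diagram. -/
def IsStdFilling (α : List ℕ) (T : Filling) : Prop :=
  (∀ c, ¬ IsCell α c → T c = 0) ∧
  (∀ c, IsCell α c → 1 ≤ T c ∧ T c ≤ α.sum) ∧
  (∀ c c', IsCell α c → IsCell α c' → T c = T c' → c = c') ∧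
  (∀ m, 1 ≤ m → m ≤ α.sum → ∃ c, IsCell α c ∧ T c = m)

/-- A standard immaculate tableau of shape `α`: a bijective standard filling whose
first-column entries strictly increase bottom to top and whose rows strictly
increase left to right. -/
def IsSIT (α : List ℕ) (T : Filling) : Prop :=
  IsStdFilling α T ∧
  (∀ i i' : ℕ, IsCell α (i, 0) → IsCell α (i', 0) → i < i' → T (i, 0) < T (i', 0)) ∧
  (∀ i j j' : ℕ, IsCell α (i, j) → IsCell α (i, j') → j < j' → T (i, j) < T (i, j'))

/-- A standard extended tableau of shape `α`: a bijective standard filling whose rows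
strictly increase left to right and all of whose columns strictly increase
bottom to top.  Note `SET(α) ⊆ SIT(α)`. -/
def IsSET (α : List ℕ) (T : Filling) : Prop :=
  IsStdFilling α T ∧
  (∀ i j j' : ℕ, IsCell α (i, j) → IsCell α (i, j') → j < j' → T (i, j) < T (i, j')) ∧
  (∀ i i' j : ℕ, IsCell α (i, j) → IsCell α (i', j) → i < i' → T (i, j) < T (i', j))

/-- `SIT*(α)`: standard immaculate tableaux whose first column contains exactly the
entries `1, 2, …, ℓ(α)`. -/
def IsSITstar (α : List ℕ) (T : Filling) : Prop :=
  IsSIT α T ∧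
  (∀ i, IsCell α (i, 0) → 1 ≤ T (i, 0) ∧ T (i, 0) ≤ α.length) ∧
  (∀ m, 1 ≤ m → m ≤ α.length → ∃ i, IsCell α (i, 0) ∧ T (i, 0) = m)

/-- In `T`, the entry `m+1` lies in a row strictly above the row of `m`. -/
def SuccAbove (α : List ℕ) (T : Filling) (m : ℕ) : Prop :=
  ∃ c c', IsCell α c ∧ IsCell α c' ∧ T c = m ∧ T c' = m + 1 ∧ c.1 < c'.1

/-- In `T`, the entries `m` and `m+1` lie in the same row. -/
def SuccSameRow (α : List ℕ) (T : Filling) (m : ℕ) : Prop :=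
  ∃ c c', IsCell α c ∧ IsCell α c' ∧ T c = m ∧ T c' = m + 1 ∧ c.1 = c'.1

/-- In `T`, the entry `m+1` lies in a row strictly below the row of `m`. -/
def SuccBelow (α : List ℕ) (T : Filling) (m : ℕ) : Prop :=
  ∃ c c', IsCell α c ∧ IsCell α c' ∧ T c = m ∧ T c' = m + 1 ∧ c'.1 < c.1

/-- In `T`, the entries `m` and `m+1` are both in the first column. -/
def BothFirstColumn (α : List ℕ) (T : Filling) (m : ℕ) : Prop :=
  ∃ c c', IsCell α c ∧ IsCell α c' ∧ T c = m ∧ T c' = m + 1 ∧ c.2 = 0 ∧ c'.2 = 0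

/-- `s_i(T)`: exchange the entries `i` and `i+1` of `T`. -/
def swapEntries (i : ℕ) (T : Filling) : Filling :=
  fun c => if T c = i then i + 1 else if T c = i + 1 then i else T c

/-- The row-strict dual immaculate 0-Hecke operator `π_i^{RS*}` on `SIT(α) ∪ {0}`
(`0` is encoded as `none`): `π_i(T) = T` if `i+1` is strictly above `i`;
`π_i(T) = 0` if `i` and `i+1` are in the same row; `π_i(T) = s_i(T)` if `i+1` is
strictly below `i`. -/
noncomputable def piRS (α : List ℕ) (i : ℕ) : Option Filling → Option Filling
  | none => none
  | some T =>
    if SuccAbove α T i then some T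
    else if SuccSameRow α T i then none
    else some (swapEntries i T)

/-- The dual immaculate 0-Hecke operator `π_i^{S*}` on `SIT(α) ∪ {0}`:
`π_i(T) = T` if `i+1` is in a row weakly below `i`; `π_i(T) = 0` if `i` and `i+1`
are both in the first column; `π_i(T) = s_i(T)` if `i+1` is strictly above `i`
and `i, i+1` are not both in the first column. -/
noncomputable def piS (α : List ℕ) (i : ℕ) : Option Filling → Option Filling
  | none => none
  | some T =>
    if SuccSameRow α T i ∨ SuccBelow α T i then some T
    else if BothFirstColumn α T i then none
    else some (swapEntries i T)

/-- The 0-Hecke operator `π_i^{A*}` on `SIT(α)`: `π_i(T) = T` if `i+1` is strictly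
above `i` or in the same row as `i`; `π_i(T) = s_i(T)` if `i+1` is strictly below `i`. -/
noncomputable def piA (α : List ℕ) (i : ℕ) (T : Filling) : Filling :=
  if SuccBelow α T i then swapEntries i T else T

/-- The 0-Hecke operator `π_i^{Ā*}` on `SIT(α) ∪ {0}`: `π_i(T) = T` if `i+1` is
strictly below `i`; `π_i(T) = 0` if `i` and `i+1` are in the same row or both in
the first column; `π_i(T) = s_i(T)` if `i+1` is strictly above `i` and `i, i+1`
are not both in the first column. -/
noncomputable def piAbar (α : List ℕ) (i : ℕ) : Option Filling → Option Filling
  | none => none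
  | some T =>
    if SuccBelow α T i then some T
    else if SuccSameRow α T i ∨ BothFirstColumn α T i then none
    else some (swapEntries i T)

/-- `x` belongs to `SIT(α) ∪ {0}` (with `0 = none`). -/
def InSITZ (α : List ℕ) (x : Option Filling) : Prop :=
  ∀ T, x = some T → IsSIT α T

/-- Successively apply the operators `π_{i_1}^{RS*}, …, π_{i_r}^{RS*}` (the list `l = [i_1, …, i_r]`). -/
noncomputable def applySeqRS (α : List ℕ) (l : List ℕ) (x : Option Filling) : Option Filling :=
  l.foldl (fun y i => piRS α i y) x

/-- Successively apply the operators `π_{i_1}^{S*}, …, π_{i_r}^{S*}`. -/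
noncomputable def applySeqS (α : List ℕ) (l : List ℕ) (x : Option Filling) : Option Filling :=
  l.foldl (fun y i => piS α i y) x

/-- The relation `T₁ ≼ T₂` on `SIT(α)`: some sequence of operators `π_i^{RS*}`
(indices in `{1, …, n-1}`, possibly empty) sends `T₁` to `T₂`. -/
def preRS (α : List ℕ) (T₁ T₂ : Filling) : Prop :=
  ∃ l : List ℕ, (∀ i ∈ l, 1 ≤ i ∧ i ≤ α.sum - 1) ∧ applySeqRS α l (some T₁) = some T₂

/-- The one-line notation of `σ(T)`: read the entries of `T` from right to left in
each row, rows from top to bottom. -/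
def readingWord (α : List ℕ) (T : Filling) : List ℕ :=
  ((List.range α.length).reverse).flatMap
    (fun i => ((List.range (α.getD i 0)).map fun j => T (i, j)).reverse)

/-- The number of inversions of a word `w`: pairs of positions `p < q` with `w p > w q`. -/
def inversions (w : List ℕ) : ℕ :=
  ((Finset.range w.length ×ˢ Finset.range w.length).filter
    (fun pq : ℕ × ℕ => pq.1 < pq.2 ∧ w.getD pq.2 0 < w.getD pq.1 0)).card

/-- `S⁰_α`: first column contains `1, …, ℓ` bottom to top; the remaining cells are
filled with `ℓ+1, …, n` consecutively, reading rows from top to bottom and left to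
right within each row. -/
noncomputable def S0 (α : List ℕ) : Filling := fun c =>
  if IsCell α c then
    if c.2 = 0 then c.1 + 1
    else
      α.length + (((List.range α.length).filter fun r => c.1 < r).map fun r => α.getD r 0 - 1).sum + c.2
  else 0

/-- `S^{row}_α`: the row superstandard tableau, entries `1, …, n` placed consecutively
reading rows bottom to top, left to right within each row. -/
noncomputable def Srow (α : List ℕ) : Filling := fun c =>
  if IsCell α c then (α.take c.1).sum + c.2 + 1 else 0

/-- `S^{row*}_α`: first column contains `1, …, ℓ` bottom to top; the remaining cells
are filled with `ℓ+1, …, n` consecutively, reading rows bottom to top, left to right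
within each row. -/
noncomputable def SrowStar (α : List ℕ) : Filling := fun c =>
  if IsCell α c then
    if c.2 = 0 then c.1 + 1
    else α.length + ((List.range c.1).map fun r => α.getD r 0 - 1).sum + c.2
  else 0

/-- `S^{col}_α`: the column superstandard tableau, entries `1, …, n` placed
consecutively reading columns bottom to top, columns left to right. -/
noncomputable def Scol (α : List ℕ) : Filling := fun c =>
  if IsCell α c then
    ((List.range c.2).map fun j' =>
        ((List.range α.length).filter fun r => j' < α.getD r 0).length).sum
      + ((List.range c.1).filter fun r => c.2 < α.getD r 0).length + 1
  else 0

/-- The image of a basis element of `V_α` under the linearly extended operator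
`π_i^{RS*}` (the value `0` of the operator is interpreted as the zero vector). -/
noncomputable def piTargetRS (α : List ℕ) (i : ℕ) (T : {T : Filling // IsSIT α T}) :
    ({T : Filling // IsSIT α T} →₀ ℚ) :=
  match piRS α i (some T.val) with
  | none => 0
  | some T' => if h : IsSIT α T' then Finsupp.single ⟨T', h⟩ 1 else 0

/-- The operator `π_i^{RS*}` extended to a `ℚ`-linear endomorphism of the free
`ℚ`-vector space `V_α` with basis `SIT(α)`. -/
noncomputable def piRSLin (α : List ℕ) (i : ℕ) :
    ({T : Filling // IsSIT α T} →₀ ℚ) →ₗ[ℚ] ({T : Filling // IsSIT α T} →₀ ℚ) :=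
  Finsupp.lsum ℚ fun T => LinearMap.toSpanSingleton ℚ _ (piTargetRS α i T)

/-- The image of a basis element of `Z_α` under the linearly extended operator
`π_i^{RS*}`. -/
noncomputable def piTargetSET (α : List ℕ) (i : ℕ) (T : {T : Filling // IsSET α T}) :
    ({T : Filling // IsSET α T} →₀ ℚ) :=
  match piRS α i (some T.val) with
  | none => 0
  | some T' => if h : IsSET α T' then Finsupp.single ⟨T', h⟩ 1 else 0

/-- The operator `π_i^{RS*}` extended to a `ℚ`-linear endomorphism of the free
`ℚ`-vector space `Z_α` with basis `SET(α)`. -/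
noncomputable def piRSLinSET (α : List ℕ) (i : ℕ) :
    ({T : Filling // IsSET α T} →₀ ℚ) →ₗ[ℚ] ({T : Filling // IsSET α T} →₀ ℚ) :=
  Finsupp.lsum ℚ fun T => LinearMap.toSpanSingleton ℚ _ (piTargetSET α i T)

/-! ### Auxiliary machinery about `Scol` -/

/-- Height of column `j`. -/
def hcol (α : List ℕ) (j : ℕ) : ℕ :=
  ((List.range α.length).filter fun r => j < α.getD r 0).length

/-- Number of cells in columns strictly to the left of column `j`. -/
def cbase (α : List ℕ) (j : ℕ) : ℕ :=
  ((List.range j).map fun j' => hcol α j').sum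

/-- Number of cells of column `j` in rows strictly below row `i`. -/
def ccnt (α : List ℕ) (i j : ℕ) : ℕ :=
  ((List.range i).filter fun r => j < α.getD r 0).length

lemma scol_eq {α : List ℕ} {c : ℕ × ℕ} (hc : IsCell α c) :
    Scol α c = cbase α c.2 + ccnt α c.1 c.2 + 1 := by
  simp only [Scol, if_pos hc, cbase, ccnt, hcol]

lemma ccnt_mono {α : List ℕ} {i i' : ℕ} (j : ℕ) (h : i ≤ i') :
    ccnt α i j ≤ ccnt α i' j :=
  (((List.range_sublist.mpr h)).filter _).length_le

lemma ccnt_succ {α : List ℕ} {i j : ℕ} (h : j < α.getD i 0) :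
    ccnt α (i + 1) j = ccnt α i j + 1 := by
  unfold ccnt
  rw [List.range_succ, List.filter_append, List.length_append]
  have h1 : List.filter (fun r => decide (j < α.getD r 0)) [i] = [i] := by
    have hd : (fun r => decide (j < α.getD r 0)) i = true := decide_eq_true h
    simp only [List.filter_cons, hd, if_true, List.filter_nil]
  rw [h1]
  rfl

lemma ccnt_lt {α : List ℕ} {i i' j : ℕ} (h : j < α.getD i 0) (hii : i < i') :
    ccnt α i j < ccnt α i' j := by
  have h1 : ccnt α (i + 1) j = ccnt α i j + 1 := ccnt_succ h
  have h2 : ccnt α (i + 1) j ≤ ccnt α i' j := ccnt_mono j hii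
  omega

lemma hcol_eq_ccnt (α : List ℕ) (j : ℕ) : hcol α j = ccnt α α.length j := rfl

lemma ccnt_lt_hcol {α : List ℕ} {i j : ℕ} (hi : i < α.length) (h : j < α.getD i 0) :
    ccnt α i j < hcol α j := by
  rw [hcol_eq_ccnt]; exact ccnt_lt h hi

lemma cbase_succ (α : List ℕ) (j : ℕ) : cbase α (j + 1) = cbase α j + hcol α j := by
  simp [cbase, List.range_succ]

lemma cbase_mono (α : List ℕ) {j j' : ℕ} (h : j ≤ j') : cbase α j ≤ cbase α j' := by
  induction j', h using Nat.le_induction with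
  | base => exact le_refl _
  | succ k hk ih => rw [cbase_succ]; omega

lemma scol_lt_same_col {α : List ℕ} {i i' j : ℕ} (hc : IsCell α (i, j))
    (hc' : IsCell α (i', j)) (h : i < i') : Scol α (i, j) < Scol α (i', j) := by
  rw [scol_eq hc, scol_eq hc']
  show cbase α j + ccnt α i j + 1 < cbase α j + ccnt α i' j + 1
  have := ccnt_lt (α := α) (i' := i') (show j < α.getD i 0 from hc.2) h
  omega

lemma scol_lt_cross {α : List ℕ} {i i' j j' : ℕ} (hc : IsCell α (i, j))
    (hc' : IsCell α (i', j')) (h : j < j') : Scol α (i, j) < Scol α (i', j') := by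
  rw [scol_eq hc, scol_eq hc']
  show cbase α j + ccnt α i j + 1 < cbase α j' + ccnt α i' j' + 1
  have h1 : ccnt α i j < hcol α j :=
    ccnt_lt_hcol (show i < α.length from hc.1) (show j < α.getD i 0 from hc.2)
  have h2 : cbase α j + hcol α j ≤ cbase α j' := by
    rw [← cbase_succ]; exact cbase_mono α h
  omega

lemma scol_inj {α : List ℕ} {c c' : ℕ × ℕ} (hc : IsCell α c) (hc' : IsCell α c')
    (h : Scol α c = Scol α c') : c = c' := by
  obtain ⟨i, j⟩ := c; obtain ⟨i', j'⟩ := c'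
  rcases lt_trichotomy j j' with hj | hj | hj
  · exact absurd h (ne_of_lt (scol_lt_cross hc hc' hj))
  · subst hj
    rcases lt_trichotomy i i' with hi | hi | hi
    · exact absurd h (ne_of_lt (scol_lt_same_col hc hc' hi))
    · rw [hi]
    · exact absurd h.symm (ne_of_lt (scol_lt_same_col hc' hc hi))
  · exact absurd h.symm (ne_of_lt (scol_lt_cross hc' hc hj))

lemma scol_pos {α : List ℕ} {c : ℕ × ℕ} (hc : IsCell α c) : 1 ≤ Scol α c := by
  rw [scol_eq hc]; omega

lemma list_sum_range (f : ℕ → ℕ) (k : ℕ) :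
    ((List.range k).map f).sum = ∑ j ∈ Finset.range k, f j := by
  induction k with
  | zero => simp
  | succ k ih => rw [List.range_succ, Finset.sum_range_succ]; simp [ih]

lemma hcol_cons (a : ℕ) (α : List ℕ) (j : ℕ) :
    hcol (a :: α) j = (if j < a then 1 else 0) + hcol α j := by
  simp only [hcol, List.length_cons, List.range_succ_eq_map,
    ← List.countP_eq_length_filter, List.countP_cons, List.countP_map]
  have : ((fun r => decide (j < (a :: α).getD r 0)) ∘ Nat.succ)
      = fun r => decide (j < α.getD r 0) := by
    funext r; simp [Function.comp, List.getD_cons_succ]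
  rw [this]
  simp [List.getD_cons_zero]
  split <;> omega

lemma cbase_le (α : List ℕ) (k : ℕ) : cbase α k ≤ α.sum := by
  induction α with
  | nil =>
    have : ∀ j, hcol [] j = 0 := fun j => rfl
    simp [cbase, this]
  | cons a t ih =>
    have hsplit : cbase (a :: t) k
        = (∑ j ∈ Finset.range k, if j < a then 1 else 0) + cbase t k := by
      rw [cbase, list_sum_range, cbase, list_sum_range, ← Finset.sum_add_distrib]
      exact Finset.sum_congr rfl fun j _ => hcol_cons a t j
    have hle : (∑ j ∈ Finset.range k, if j < a then 1 else 0) ≤ a := by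
      rw [← Finset.card_filter]
      calc (Finset.filter (fun j => j < a) (Finset.range k)).card
          ≤ (Finset.range a).card := by
            apply Finset.card_le_card
            intro x hx
            simp only [Finset.mem_filter, Finset.mem_range] at hx ⊢
            exact hx.2
        _ = a := Finset.card_range a
    rw [hsplit, List.sum_cons]
    omega

lemma scol_le_sum {α : List ℕ} {c : ℕ × ℕ} (hc : IsCell α c) : Scol α c ≤ α.sum := by
  rw [scol_eq hc]
  have h1 : ccnt α c.1 c.2 < hcol α c.2 := ccnt_lt_hcol hc.1 hc.2
  have h2 : cbase α (c.2 + 1) ≤ α.sum := cbase_le α _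
  rw [cbase_succ] at h2
  omega

/-- The set of cells of `α`, as a `Finset`. -/
def cellFinset (α : List ℕ) : Finset (ℕ × ℕ) :=
  (Finset.range α.length).biUnion fun i => (Finset.range (α.getD i 0)).image fun j => (i, j)

lemma mem_cellFinset {α : List ℕ} {c : ℕ × ℕ} : c ∈ cellFinset α ↔ IsCell α c := by
  obtain ⟨i, j⟩ := c
  simp only [cellFinset, Finset.mem_biUnion, Finset.mem_image, Finset.mem_range, IsCell]
  constructor
  · rintro ⟨a, ha, b, hb, h⟩
    obtain ⟨rfl, rfl⟩ := Prod.mk.injEq a b i j ▸ h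
    exact ⟨ha, hb⟩
  · rintro ⟨h1, h2⟩
    exact ⟨i, h1, j, h2, rfl⟩

lemma sum_range_getD (α : List ℕ) : ∑ i ∈ Finset.range α.length, α.getD i 0 = α.sum := by
  induction α with
  | nil => simp
  | cons a t ih =>
    rw [List.length_cons, Finset.sum_range_succ']
    simp only [List.getD_cons_succ, List.getD_cons_zero, ih, List.sum_cons]
    omega

lemma card_cellFinset (α : List ℕ) : (cellFinset α).card = α.sum := by
  rw [cellFinset, Finset.card_biUnion]
  · rw [← sum_range_getD]
    refine Finset.sum_congr rfl fun i _ => ?_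
    rw [Finset.card_image_of_injective _ (fun a b h => (Prod.ext_iff.mp h).2),
      Finset.card_range]
  · intro x _ y _ hxy
    rw [Function.onFun, Finset.disjoint_left]
    intro c hc hc'
    simp only [Finset.mem_image, Finset.mem_range] at hc hc'
    obtain ⟨b, _, rfl⟩ := hc
    obtain ⟨b', _, h⟩ := hc'
    exact hxy ((Prod.ext_iff.mp h).1).symm

lemma scol_surj {α : List ℕ} {m : ℕ} (h1 : 1 ≤ m) (h2 : m ≤ α.sum) :
    ∃ c, IsCell α c ∧ Scol α c = m := by
  have hinj : Set.InjOn (Scol α) ↑(cellFinset α) := fun c hc c' hc' h =>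
    scol_inj (mem_cellFinset.mp hc) (mem_cellFinset.mp hc') h
  have himg : (cellFinset α).image (Scol α) ⊆ Finset.Icc 1 α.sum := by
    intro x hx
    obtain ⟨c, hc, rfl⟩ := Finset.mem_image.mp hx
    exact Finset.mem_Icc.mpr ⟨scol_pos (mem_cellFinset.mp hc),
      scol_le_sum (mem_cellFinset.mp hc)⟩
  have hcard : (Finset.Icc 1 α.sum).card ≤ ((cellFinset α).image (Scol α)).card := by
    rw [Finset.card_image_of_injOn hinj, card_cellFinset, Nat.card_Icc]
    omega
  have heq := Finset.eq_of_subset_of_card_le himg hcard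
  have hm : m ∈ (cellFinset α).image (Scol α) := by
    rw [heq]; exact Finset.mem_Icc.mpr ⟨h1, h2⟩
  obtain ⟨c, hc, h⟩ := Finset.mem_image.mp hm
  exact ⟨c, mem_cellFinset.mp hc, h⟩

lemma getD_pos_of_mem {α : List ℕ} (hpos : ∀ a ∈ α, 0 < a) {i : ℕ} (hi : i < α.length) :
    0 < α.getD i 0 := by
  rw [List.getD_eq_getElem α 0 hi]
  exact hpos _ (List.getElem_mem hi)

theorem Scol_fixed_not_P (n : ℕ) (α : List ℕ) (hα : IsComposition α n)
    (P : Filling) (hP : IsSET α P) (hne : P ≠ Scol α) :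
    ∃ j, 1 ≤ j ∧ j ≤ n - 1 ∧ piRS α j (some (Scol α)) = some (Scol α) ∧
      piRS α j (some P) ≠ some P := by
  obtain ⟨hpos, rfl⟩ := hα
  obtain ⟨⟨Poff, Prng, Pinj, Psurj⟩, Prow, Pcol⟩ := hP
  have hQex : ∃ m, ∃ c, IsCell α c ∧ P c = m ∧ Scol α c ≠ m := by
    by_contra hcon
    push_neg at hcon
    apply hne
    funext c
    by_cases hc : IsCell α c
    · exact (hcon (P c) c hc rfl).symm
    · rw [Poff c hc]
      simp only [Scol, if_neg hc]
  set m := Nat.find hQex with hmdef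
  obtain ⟨⟨p, q⟩, hcPcell, hcPval, hcPbad⟩ := Nat.find_spec hQex
  have hcP1 : p < α.length := hcPcell.1
  have hcP2 : q < α.getD p 0 := hcPcell.2
  have hmin : ∀ k, k < m → ∀ c, IsCell α c → P c = k → Scol α c = k := by
    intro k hk c hc hval
    by_contra hbad
    exact Nat.find_min hQex hk ⟨c, hc, hval, hbad⟩
  have hPrng := Prng (p, q) hcPcell
  rw [hcPval] at hPrng
  have hA2 : ∀ c, IsCell α c → Scol α c < m → P c = Scol α c := by
    intro c hc hlt
    obtain ⟨c', hc', hval'⟩ := Psurj (Scol α c) (scol_pos hc) (scol_le_sum hc)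
    have h1 : Scol α c' = Scol α c := hmin _ hlt c' hc' hval'
    have h2 := scol_inj hc' hc h1
    subst h2
    exact hval'
  have hL : 0 < α.length := by
    by_contra h
    have hnil : α = [] := List.length_eq_zero_iff.mp (by omega)
    have hz : α.sum = 0 := by rw [hnil]; rfl
    omega
  have hcell00 : IsCell α (0, 0) := ⟨hL, getD_pos_of_mem hpos hL⟩
  have hm2 : 2 ≤ m := by
    by_contra hm2
    have hm1' : m = 1 := by omega
    have hq : q = 0 := by
      by_contra hq
      have hcellL : IsCell α (p, q - 1) := ⟨hcP1, (by omega : q - 1 < α.getD p 0)⟩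
      have h2 := Prow p (q - 1) q hcellL hcPcell (by omega)
      have h3 := (Prng _ hcellL).1
      rw [hcPval] at h2
      omega
    subst hq
    have hpz : p = 0 := by
      by_contra hp
      have hcellB : IsCell α (p - 1, 0) :=
        ⟨(by omega : p - 1 < α.length), getD_pos_of_mem hpos (by omega)⟩
      have h2 := Pcol (p - 1) p 0 hcellB hcPcell (by omega)
      have h3 := (Prng _ hcellB).1
      rw [hcPval] at h2
      omega
    subst hpz
    apply hcPbad
    rw [scol_eq hcell00]
    show cbase α 0 + ccnt α 0 0 + 1 = m
    have e1 : cbase α 0 = 0 := rfl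
    have e2 : ccnt α 0 0 = 0 := rfl
    omega
  obtain ⟨⟨a', b'⟩, hcS'cell, hcS'val⟩ := scol_surj (α := α) (m := m - 1) (by omega) (by omega)
  obtain ⟨⟨a, b⟩, hcScell, hcSval⟩ := scol_surj (α := α) (m := m) (by omega) (by omega)
  have hPcS' : P (a', b') = m - 1 := by
    have h1 := hA2 _ hcS'cell (by rw [hcS'val]; omega)
    rw [h1, hcS'val]
  rcases lt_trichotomy b' b with hbb | hbb | hbb
  · -- Case I : in Scol, m starts a new column. We show P also puts m at (a,b): contradiction.
    exfalso
    have step1 : ∀ x y, IsCell α (x, y) → Scol α (x, y) < m → y < b := by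
      intro x y hc hlt
      by_contra hy
      push_neg at hy
      rcases Nat.lt_or_ge b y with h1 | h1
      · have h2 := scol_lt_cross hcScell hc h1
        rw [hcSval] at h2
        omega
      · have hyb : y = b := by omega
        subst hyb
        rcases lt_trichotomy x a with h2 | h2 | h2
        · have h3 := scol_lt_cross hcS'cell hc hbb
          rw [hcS'val] at h3
          omega
        · rw [h2, hcSval] at hlt
          omega
        · have h3 := scol_lt_same_col hcScell hc h2
          rw [hcSval] at h3
          omega
    have hq1 : ¬ q < b := by
      intro h1
      have h2 := scol_lt_cross hcPcell hcScell h1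
      rw [hcSval] at h2
      have h3 := hA2 _ hcPcell h2
      omega
    have hq2 : ¬ b < q := by
      intro h1
      have hcellL : IsCell α (p, q - 1) := ⟨hcP1, (by omega : q - 1 < α.getD p 0)⟩
      have h2 := Prow p (q - 1) q hcellL hcPcell (by omega)
      rw [hcPval] at h2
      have h3 := hmin _ h2 _ hcellL rfl
      have h4 := step1 p (q - 1) hcellL (by rw [h3]; exact h2)
      omega
    have hq : q = b := by omega
    subst hq
    rcases lt_trichotomy p a with h1 | h1 | h1
    · have h2 := scol_lt_same_col hcPcell hcScell h1
      rw [hcSval] at h2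
      have h3 := hA2 _ hcPcell h2
      omega
    · apply hcPbad
      rw [h1]
      exact hcSval
    · have h2 := Pcol a p q hcScell hcPcell h1
      rw [hcPval] at h2
      have h3 := hmin _ h2 _ hcScell rfl
      rw [hcSval] at h3
      omega
  · -- Case II : m continues the column of m-1 in Scol.
    subst hbb
    have haa : a' < a := by
      rcases lt_trichotomy a' a with h | h | h
      · exact h
      · exfalso
        rw [h, hcSval] at hcS'val
        omega
      · exfalso
        have h2 := scol_lt_same_col hcScell hcS'cell h
        rw [hcSval, hcS'val] at h2
        omega
    have hSA : SuccAbove α (Scol α) (m - 1) := by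
      refine ⟨(a', b'), (a, b'), hcS'cell, hcScell, hcS'val, ?_, haa⟩
      rw [hcSval]
      omega
    have hfix : piRS α (m - 1) (some (Scol α)) = some (Scol α) := by
      simp only [piRS]
      rw [if_pos hSA]
    have hnSA : ¬ SuccAbove α P (m - 1) := by
      rintro ⟨c1, c2, hc1, hc2, hv1, hv2, hrow⟩
      have hv2' : P c2 = m := by omega
      have hc2P : c2 = (p, q) := Pinj c2 (p, q) hc2 hcPcell (by rw [hv2', hcPval])
      have hc1S : c1 = (a', b') := Pinj c1 (a', b') hc1 hcS'cell (by rw [hv1, hPcS'])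
      rw [hc1S, hc2P] at hrow
      have hrow' : a' < p := hrow
      have step1 : ∀ x y, IsCell α (x, y) → Scol α (x, y) < m →
          y < b' ∨ (y = b' ∧ x ≤ a') := by
        intro x y hc hlt
        rcases lt_trichotomy y b' with h1 | h1 | h1
        · exact Or.inl h1
        · subst h1
          refine Or.inr ⟨rfl, ?_⟩
          by_contra hx
          push_neg at hx
          have h3 := scol_lt_same_col hcS'cell hc hx
          rw [hcS'val] at h3
          omega
        · have h2 := scol_lt_cross hcScell hc h1
          rw [hcSval] at h2
          omega
      have hq1 : ¬ q < b' := by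
        intro h1
        have h2 := scol_lt_cross hcPcell hcScell h1
        rw [hcSval] at h2
        have h3 := hA2 _ hcPcell h2
        omega
      have hq2 : ¬ b' < q := by
        intro h1
        have hcellL : IsCell α (p, q - 1) := ⟨hcP1, (by omega : q - 1 < α.getD p 0)⟩
        have h2 := Prow p (q - 1) q hcellL hcPcell (by omega)
        rw [hcPval] at h2
        have h3 := hmin _ h2 _ hcellL rfl
        have h4 := step1 p (q - 1) hcellL (by rw [h3]; exact h2)
        rcases h4 with h4 | ⟨h4, h5⟩
        · omega
        · omega
      have hq : q = b' := by omega
      subst hq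
      rcases lt_trichotomy p a with h1 | h1 | h1
      · have h2 := scol_lt_same_col hcPcell hcScell h1
        rw [hcSval] at h2
        have h3 := hA2 _ hcPcell h2
        omega
      · exact hcPbad (by rw [h1]; exact hcSval)
      · have h2 := Pcol a p q hcScell hcPcell h1
        rw [hcPval] at h2
        have h3 := hmin _ h2 _ hcScell rfl
        rw [hcSval] at h3
        omega
    refine ⟨m - 1, by omega, by omega, hfix, ?_⟩
    intro hcontra
    have hPval : piRS α (m - 1) (some P)
        = if SuccAbove α P (m - 1) then some P
          else if SuccSameRow α P (m - 1) then none
          else some (swapEntries (m - 1) P) := rfl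
    rw [hPval, if_neg hnSA] at hcontra
    by_cases hsr : SuccSameRow α P (m - 1)
    · rw [if_pos hsr] at hcontra
      exact nomatch hcontra
    · rw [if_neg hsr] at hcontra
      have hswap : swapEntries (m - 1) P = P := Option.some.inj hcontra
      have hval := congrFun hswap (a', b')
      have hval2 : (if P (a', b') = m - 1 then m - 1 + 1
          else if P (a', b') = m - 1 + 1 then m - 1 else P (a', b')) = P (a', b') := hval
      rw [if_pos hPcS'] at hval2
      rw [hPcS'] at hval2
      omega
  · exfalso
    have h2 := scol_lt_cross hcScell hcS'cell hbb
    rw [hcSval, hcS'val] at h2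
    omega

end ImmHecke
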